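/- Let k ≥ 4 and p an odd prime with p ≡ 1 (mod k−2), and assume either k = p+1 or (k−1) is not a (k−2)-th power residue mod p. Let φ(X) = 2X^k − kX² with second order differencing polynomial ψ(X,Y,Z). Then for all x, z ∈ pℤ_p the univariate polynomial Y ↦ ψ(x,Y,z) has k−2 distinct roots in ℤ_p (it splits completely over ℤ_p). -/

import Mathlib

open MvPolynomial

/-- The explicit second-order-difference quotient expression. -/
def sodQ (k : ℕ) {R : Type*} [CommRing R] (a b c : R) : R :=
  ∑ j ∈ Finset.range (k - 1), (k.choose (j+2) : R) * c ^ (k - 2 - j) *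
    ∑ i ∈ Finset.range (j + 1), ((j+2).choose (i+1) : R) * a ^ i * b ^ (j - i)

lemma sodQ_map {R S FF : Type*} [CommRing R] [CommRing S] [FunLike FF R S]
    [RingHomClass FF R S] (f : FF) (k : ℕ) (a b c : R) :
    f (sodQ k a b c) = sodQ k (f a) (f b) (f c) := by
  simp [sodQ, map_sum, map_mul, map_pow, map_natCast]

lemma sodQ_polymap {R S : Type*} [CommRing R] [CommRing S] (f : R →+* S) (k : ℕ)
    (a b c : Polynomial R) :
    (sodQ k a b c).map f = sodQ k (a.map f) (b.map f) (c.map f) := by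
  have := sodQ_map (Polynomial.mapRingHom f) k a b c
  simpa using this

lemma sodQ_middle {R : Type*} [CommRing R] (j : ℕ) (a b : R) :
    (a + b) ^ (j+2) = a ^ (j+2) + b ^ (j+2) +
      a * b * ∑ i ∈ Finset.range (j + 1), ((j+2).choose (i+1) : R) * a ^ i * b ^ (j - i) := by
  rw [add_pow]
  rw [Finset.sum_range_succ, Finset.sum_range_succ']
  have h1 : ∀ i ∈ Finset.range (j+1),
      a ^ (i+1) * b ^ (j+2 - (i+1)) * ((j+2).choose (i+1) : R)
      = a * b * (((j+2).choose (i+1) : R) * a ^ i * b ^ (j - i)) := by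
    intro i hi
    simp only [Finset.mem_range] at hi
    have : j + 2 - (i+1) = (j - i) + 1 := by omega
    rw [this, pow_succ, pow_succ]
    ring
  rw [Finset.sum_congr rfl h1, ← Finset.mul_sum]
  simp [Nat.choose_self]
  ring

lemma sod_key {R : Type*} [CommRing R] (m : ℕ) (a b c : R) :
    (a + b + c) ^ (m+2) - (a + c) ^ (m+2) - (b + c) ^ (m+2) + c ^ (m+2)
      = a * b * sodQ (m+2) a b c := by
  have hab := add_pow (a+b) c (m+2)
  have ha := add_pow a c (m+2)
  have hb := add_pow b c (m+2)
  rw [hab, ha, hb]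
  rw [← Finset.sum_sub_distrib, ← Finset.sum_sub_distrib]
  have hsplit : ∀ j ∈ Finset.range (m+3),
      (a+b) ^ j * c ^ (m+2-j) * ((m+2).choose j : R)
      - a ^ j * c ^ (m+2-j) * ((m+2).choose j : R)
      - b ^ j * c ^ (m+2-j) * ((m+2).choose j : R)
      = ((a+b)^j - a^j - b^j) * c ^ (m+2-j) * ((m+2).choose j : R) := by
    intro j hj; ring
  rw [Finset.sum_congr rfl hsplit]
  rw [Finset.sum_range_succ', Finset.sum_range_succ']
  have h0 : ((a+b)^0 - a^0 - b^0 : R) = -1 := by norm_num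
  have h1 : ((a+b)^1 - a^1 - b^1 : R) = 0 := by ring
  rw [h0, h1]
  have hmid : ∀ j ∈ Finset.range (m+1),
      ((a+b)^(j+1+1) - a^(j+1+1) - b^(j+1+1)) * c ^ (m+2-(j+1+1)) * ((m+2).choose (j+1+1) : R)
      = a * b * (((m+2).choose (j+2) : R) * c ^ (m+2-2-j) *
          ∑ i ∈ Finset.range (j + 1), ((j+2).choose (i+1) : R) * a ^ i * b ^ (j - i)) := by
    intro j hj
    have h2 : j+1+1 = j+2 := rfl
    rw [h2, sodQ_middle]
    have h3 : m+2-(j+2) = m+2-2-j := by omega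
    rw [h3]
    ring
  rw [Finset.sum_congr rfl hmid, ← Finset.mul_sum]
  simp only [sodQ]
  have h4 : m + 2 - 1 = m + 1 := rfl
  rw [h4]
  simp

lemma sodQ_zero {R : Type*} [CommRing R] (m : ℕ) (b : R) :
    sodQ (m+2) 0 b 0 = (m+2 : R) * b ^ m := by
  rw [sodQ]
  have h1 : m + 2 - 1 = m + 1 := rfl
  rw [h1]
  rw [Finset.sum_eq_single_of_mem m (Finset.self_mem_range_succ m)]
  · rw [Finset.sum_eq_single_of_mem 0 (Finset.mem_range.2 (Nat.succ_pos m))]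
    · simp [Nat.choose_self, Nat.choose_one_right]
    · intro i _ hi
      rw [zero_pow hi]; ring
  · intro j hj hjm
    have : m + 2 - 2 - j ≠ 0 := by simp only [Finset.mem_range] at hj; omega
    rw [zero_pow this]; ring

theorem padic_sod_splits (k p : ℕ) [Fact p.Prime] (hk : 4 ≤ k) (hodd : Odd p)
    (hcong : p % (k - 2) = 1)
    (hcase : k = p + 1 ∨ ¬ ∃ y : ZMod p, y ^ (k - 2) = (k - 1 : ZMod p))
    (φ : Polynomial ℚ_[p])
    (hφ : φ = Polynomial.C 2 * Polynomial.X ^ k - Polynomial.C (k : ℚ_[p]) * Polynomial.X ^ 2)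
    (ψ : MvPolynomial (Fin 3) ℚ_[p])
    (hψ : Polynomial.aeval (X 0 + X 1 - X 2 : MvPolynomial (Fin 3) ℚ_[p]) φ
          - Polynomial.aeval (X 0 : MvPolynomial (Fin 3) ℚ_[p]) φ
          - Polynomial.aeval (X 1 : MvPolynomial (Fin 3) ℚ_[p]) φ
          + Polynomial.aeval (X 2 : MvPolynomial (Fin 3) ℚ_[p]) φ
        = (X 0 - X 2) * (X 1 - X 2) * ψ) :
    ∀ x z : ℤ_[p], (∃ x' : ℤ_[p], x = p * x') → (∃ z' : ℤ_[p], z = p * z') →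
      ∃ S : Finset ℤ_[p], S.card = k - 2 ∧ ∀ y ∈ S,
        Polynomial.eval (y : ℚ_[p])
          (aeval (fun i : Fin 3 => if i = 0 then Polynomial.C (x : ℚ_[p])
            else if i = 1 then (Polynomial.X : Polynomial ℚ_[p])
            else Polynomial.C (z : ℚ_[p])) ψ) = 0 := by
  classical
  have hp : p.Prime := Fact.out
  obtain ⟨m, rfl⟩ : ∃ m, k = m + 2 := ⟨k - 2, by omega⟩
  have hm2 : 2 ≤ m := by omega
  have hmk : m + 2 - 2 = m := by omega
  rw [hmk] at hcong
  -- m divides p - 1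
  have hmdvd : m ∣ p - 1 := ⟨p / m, by
    have := Nat.div_add_mod p m
    omega⟩
  have hmle : m ≤ p - 1 := Nat.le_of_dvd (by have := hp.two_le; omega) hmdvd
  -- p does not divide 2, m, m+2
  have hp2 : ¬ (p ∣ 2) := by
    intro h
    have h2 := Nat.le_of_dvd (by norm_num) h
    have hge := hp.two_le
    have : p = 2 := by omega
    rw [this] at hodd
    norm_num [Nat.odd_iff] at hodd
  have hpm : ¬ (p ∣ m) := by
    intro h
    have := Nat.le_of_dvd (by omega) h
    omega
  have hpk : ¬ (p ∣ m + 2) := by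
    intro h
    have hle := Nat.le_of_dvd (by omega) h
    -- p ≥ m + 1 (since m ∣ p - 1, p - 1 ≥ m), so p = m+1 or p = m+2
    have hge : m + 1 ≤ p := by omega
    have hcases : p = m + 1 ∨ p = m + 2 := by omega
    rcases hcases with h1 | h1
    · -- m+1 divides m+2, impossible
      rw [h1] at h
      have := Nat.dvd_sub h (dvd_refl (m+1))
      have h2 : m + 2 - (m + 1) = 1 := by omega
      rw [h2] at this
      have := Nat.le_of_dvd (by norm_num) this
      omega
    · rcases Nat.lt_or_ge 2 m with hm | hm
      · have h2 : p % m = 2 % m := by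
          rw [h1]
          conv_lhs => rw [show m + 2 = 2 + 1 * m by ring]
          rw [Nat.add_mul_mod_self_right]
        have h3 : 2 % m = 2 := Nat.mod_eq_of_lt (by omega)
        omega
      · have hm2' : m = 2 := by omega
        rw [h1, hm2'] at hp
        norm_num at hp
  -- ψ is the explicit polynomial
  have hA0 : (X 0 - X 2 : MvPolynomial (Fin 3) ℚ_[p]) ≠ 0 := by
    intro h
    have := congrArg (eval (fun i : Fin 3 => if i = 0 then (1:ℚ_[p]) else 0)) h
    simp at this
  have hB0 : (X 1 - X 2 : MvPolynomial (Fin 3) ℚ_[p]) ≠ 0 := by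
    intro h
    have := congrArg (eval (fun i : Fin 3 => if i = 1 then (1:ℚ_[p]) else 0)) h
    simp at this
  set ψ₀ : MvPolynomial (Fin 3) ℚ_[p] :=
    2 * sodQ (m+2) (X 0 - X 2) (X 1 - X 2) (X 2) - 2*((m+2 : ℕ) : MvPolynomial (Fin 3) ℚ_[p])
    with hψ₀def
  have hψeq : ψ = ψ₀ := by
    have hφψ := hψ
    rw [hφ] at hφψ
    simp only [map_sub, map_mul, map_pow, Polynomial.aeval_X, Polynomial.aeval_C,
      map_natCast, map_ofNat] at hφψ
    have hAB : (X 0 - X 2 : MvPolynomial (Fin 3) ℚ_[p]) * (X 1 - X 2) * ψ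
        = (X 0 - X 2) * (X 1 - X 2) * ψ₀ := by
      rw [← hφψ, hψ₀def]
      linear_combination (2 : MvPolynomial (Fin 3) ℚ_[p]) *
        sod_key m (X 0 - X 2 : MvPolynomial (Fin 3) ℚ_[p]) (X 1 - X 2) (X 2)
    exact mul_left_cancel₀ (mul_ne_zero hA0 hB0) hAB
  -- now work with concrete polynomials
  intro x z hx hz
  set σ : Fin 3 → Polynomial ℚ_[p] := fun i : Fin 3 => if i = 0 then Polynomial.C (x : ℚ_[p])
            else if i = 1 then (Polynomial.X : Polynomial ℚ_[p])
            else Polynomial.C (z : ℚ_[p]) with hσdef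
  set F : Polynomial ℤ_[p] :=
    2 * sodQ (m+2) (Polynomial.C x - Polynomial.C z) (Polynomial.X - Polynomial.C z)
        (Polynomial.C z) - 2*((m+2 : ℕ) : Polynomial ℤ_[p]) with hFdef
  set G : Polynomial ℚ_[p] :=
    2 * sodQ (m+2) (Polynomial.C (x:ℚ_[p]) - Polynomial.C (z:ℚ_[p]))
        (Polynomial.X - Polynomial.C (z:ℚ_[p])) (Polynomial.C (z:ℚ_[p]))
      - 2*((m+2 : ℕ) : Polynomial ℚ_[p]) with hGdef
  have hGF : F.map PadicInt.Coe.ringHom = G := by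
    rw [hFdef, hGdef]
    simp only [Polynomial.map_sub, Polynomial.map_mul, sodQ_polymap, Polynomial.map_C,
      Polynomial.map_X, Polynomial.map_natCast, Polynomial.map_ofNat]
    rfl
  have hGψ : aeval σ ψ = G := by
    rw [hψeq, hψ₀def, hGdef]
    simp only [map_sub, map_mul, map_natCast, map_ofNat, sodQ_map, aeval_X]
    simp [hσdef]
  -- reduction of F mod p
  have hxbar : PadicInt.toZMod x = 0 := by
    obtain ⟨x', rfl⟩ := hx
    simp
  have hzbar : PadicInt.toZMod z = 0 := by
    obtain ⟨z', rfl⟩ := hz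
    simp
  have hFbar : F.map PadicInt.toZMod
      = 2*((m+2 : ℕ) : Polynomial (ZMod p)) * Polynomial.X ^ m
        - 2*((m+2 : ℕ) : Polynomial (ZMod p)) := by
    rw [hFdef]
    simp only [Polynomial.map_sub, Polynomial.map_mul, sodQ_polymap, Polynomial.map_C,
      Polynomial.map_X, Polynomial.map_natCast, Polynomial.map_ofNat, hxbar, hzbar,
      Polynomial.C_0, sub_zero]
    rw [sodQ_zero]
    push_cast
    ring
  have heval : ∀ r : ZMod p, Polynomial.eval r (F.map PadicInt.toZMod)
      = 2*((m+2 : ℕ) : ZMod p) * r ^ m - 2*((m+2 : ℕ) : ZMod p) := by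
    intro r
    rw [hFbar]
    simp
  have hderiv : ∀ r : ZMod p, Polynomial.eval r (Polynomial.derivative (F.map PadicInt.toZMod))
      = 2*((m+2 : ℕ) : ZMod p) * (((m : ℕ) : ZMod p) * r ^ (m-1)) := by
    intro r
    rw [hFbar]
    simp [Polynomial.derivative_sub, Polynomial.derivative_mul, Polynomial.derivative_X_pow]
  -- nonvanishing mod p
  have h2ne : (2 : ZMod p) ≠ 0 := by
    rw [show (2 : ZMod p) = ((2:ℕ) : ZMod p) by norm_cast, Ne,
      ZMod.natCast_eq_zero_iff]
    exact hp2
  have hkne : ((m+2 : ℕ) : ZMod p) ≠ 0 := by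
    rw [Ne, ZMod.natCast_eq_zero_iff]
    exact hpk
  have hmne : ((m : ℕ) : ZMod p) ≠ 0 := by
    rw [Ne, ZMod.natCast_eq_zero_iff]
    exact hpm
  -- kernel of reduction
  have hker : ∀ u : ℤ_[p], PadicInt.toZMod u = 0 ↔ ‖u‖ < 1 := by
    intro u
    rw [PadicInt.norm_lt_one_iff_dvd, ← Ideal.mem_span_singleton,
      ← PadicInt.maximalIdeal_eq_span_p, ← PadicInt.ker_toZMod, RingHom.mem_ker]
  have hevalmap : ∀ (P : Polynomial ℤ_[p]) (u : ℤ_[p]),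
      PadicInt.toZMod (P.eval u) = (P.map PadicInt.toZMod).eval (PadicInt.toZMod u) := by
    intro P u
    rw [Polynomial.eval_map, Polynomial.eval₂_at_apply]
  -- Hensel lifting of each root of unity
  have hensel : ∀ r : ZMod p, r ^ m = 1 → ∃ y : ℤ_[p],
      Polynomial.eval y F = 0 ∧ PadicInt.toZMod y = r := by
    intro r hr
    set a : ℤ_[p] := ((r.val : ℕ) : ℤ_[p]) with hadef
    have hta : PadicInt.toZMod a = r := by
      rw [hadef, map_natCast]
      exact ZMod.natCast_rightInverse r
    have h1 : ‖Polynomial.eval a F‖ < 1 := by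
      rw [← hker]
      rw [hevalmap, hta, heval, hr]
      ring
    have h2 : ‖Polynomial.eval a (Polynomial.derivative F)‖ = 1 := by
      have hne : PadicInt.toZMod (Polynomial.eval a (Polynomial.derivative F)) ≠ 0 := by
        rw [hevalmap, hta, ← Polynomial.derivative_map, hderiv]
        have hrne : r ≠ 0 := by
          intro h0
          rw [h0, zero_pow (by omega : m ≠ 0)] at hr
          exact zero_ne_one hr
        exact mul_ne_zero (mul_ne_zero h2ne hkne) (mul_ne_zero hmne (pow_ne_zero _ hrne))
      have hle := PadicInt.norm_le_one (Polynomial.eval a (Polynomial.derivative F))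
      have hnlt : ¬ ‖Polynomial.eval a (Polynomial.derivative F)‖ < 1 := by
        rw [← hker]; exact hne
      linarith [lt_or_ge ‖Polynomial.eval a (Polynomial.derivative F)‖ 1]
    have hnorm : ‖Polynomial.eval a F‖ < ‖Polynomial.eval a (Polynomial.derivative F)‖ ^ 2 := by
      rw [h2]; simpa using h1
    obtain ⟨y, hy0, hydist, -, -⟩ := hensels_lemma hnorm
    refine ⟨y, hy0, ?_⟩
    have : PadicInt.toZMod (y - a) = 0 := by
      rw [hker]
      rw [Polynomial.coe_aeval_eq_eval, h2] at hydist
      exact hydist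
    rw [map_sub, hta, sub_eq_zero] at this
    exact this
  -- the set of (k-2)-nd roots of unity mod p
  obtain ⟨g, hg⟩ := IsCyclic.exists_ofOrder_eq_natCard (α := (ZMod p)ˣ)
  have hcard : Nat.card (ZMod p)ˣ = p - 1 := by
    rw [Nat.card_eq_fintype_card, ZMod.card_units_eq_totient, Nat.totient_prime hp]
  set q : ℕ := (p-1)/m with hqdef
  have hq0 : q ≠ 0 := by
    have := Nat.div_pos hmle (by omega)
    omega
  have hqd : q ∣ p - 1 := ⟨m, by rw [hqdef, Nat.div_mul_cancel hmdvd]⟩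
  have hqord : orderOf (g ^ q) = m := by
    rw [orderOf_pow' _ hq0, hg, hcard, Nat.gcd_eq_right hqd, hqdef,
      Nat.div_div_self hmdvd (by have := hp.two_le; omega)]
  set T : Finset (ZMod p) :=
    (Finset.range m).image (fun i : ℕ => (((g ^ q) ^ i : (ZMod p)ˣ) : ZMod p)) with hTdef
  have hTcard : T.card = m := by
    rw [hTdef, Finset.card_image_of_injOn, Finset.card_range]
    intro i hi j hj hij
    simp only [Finset.coe_range, Set.mem_Iio] at hi hj
    have huv : ((g ^ q) ^ i : (ZMod p)ˣ) = (g ^ q) ^ j := Units.ext hij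
    exact pow_injOn_Iio_orderOf (by simpa [hqord] using hi) (by simpa [hqord] using hj) huv
  have hTroot : ∀ r ∈ T, r ^ m = 1 := by
    intro r hr
    rw [hTdef] at hr
    simp only [Finset.mem_image, Finset.mem_range] at hr
    obtain ⟨i, hi, rfl⟩ := hr
    rw [← Units.val_pow_eq_pow_val, ← pow_mul, mul_comm, pow_mul]
    rw [← hqord, pow_orderOf_eq_one, one_pow, Units.val_one]
  -- choose lifted roots
  have hex : ∀ r : ZMod p, ∃ y : ℤ_[p],
      PadicInt.toZMod y = r ∧ (r ^ m = 1 → Polynomial.eval y F = 0) := by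
    intro r
    by_cases hr : r ^ m = 1
    · obtain ⟨y, hy0, hyr⟩ := hensel r hr
      exact ⟨y, hyr, fun _ => hy0⟩
    · refine ⟨((r.val : ℕ) : ℤ_[p]), ?_, fun h => absurd h hr⟩
      rw [map_natCast]
      exact ZMod.natCast_rightInverse r
  choose f hf1 hf2 using hex
  refine ⟨T.image f, ?_, ?_⟩
  · have hinj : Set.InjOn f T := by
      intro u _ v _ huv
      rw [← hf1 u, ← hf1 v, huv]
    rw [Finset.card_image_of_injOn hinj, hTcard]
    omega
  · intro y hy
    simp only [Finset.mem_image] at hy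
    obtain ⟨r, hr, rfl⟩ := hy
    have h0 : Polynomial.eval (f r) F = 0 := hf2 r (hTroot r hr)
    rw [show (aeval σ ψ) = F.map PadicInt.Coe.ringHom from by rw [hGψ, hGF]]
    rw [show ((f r : ℚ_[p])) = PadicInt.Coe.ringHom (f r) from rfl]
    rw [Polynomial.eval_map, Polynomial.eval₂_at_apply, h0, map_zero]
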